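/- Let c₁,…,cₙ be nonzero integers and d₁,…,dₙ ≥ 1. If the Diophantine equation ∑_{i=1}^n c_i x_i^{d_i} = 0 is non-trivially partition regular on ℕ, then there exists a nonempty set J ⊆ {1,…,n} such that d_i = d_j for all i, j ∈ J and ∑_{j∈J} c_j = 0. -/

import Mathlib

set_option maxHeartbeats 4000000

open Finset

private lemma int_eq_of_zmod_eq' {N : ℕ} {u v : ℤ}
    (h : ((u : ZMod N) = (v : ZMod N))) (hlt : |u - v| < (N : ℤ)) : u = v := by
  have hm : u ≡ v [ZMOD (N:ℕ)] := (ZMod.intCast_eq_intCast_iff u v N).mp h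
  have hd : (N:ℤ) ∣ v - u := Int.ModEq.dvd hm
  have h0 : v - u = 0 := Int.eq_zero_of_abs_lt_dvd hd (by rw [abs_sub_comm] at hlt; exact hlt)
  omega

private lemma abs_floor_sub_le {X Y t : ℝ} (h : |X - Y| ≤ t) :
    |(⌊X⌋ : ℝ) - (⌊Y⌋ : ℝ)| ≤ t + 1 := by
  have h1 := Int.floor_le X
  have h2 := Int.lt_floor_add_one X
  have h3 := Int.floor_le Y
  have h4 := Int.lt_floor_add_one Y
  rw [abs_le] at h ⊢
  constructor <;> [linarith [h.1, h.2]; linarith [h.1, h.2]]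

private lemma abs_lt_one_of_floor_eq {X Y : ℝ} (h : ⌊X⌋ = ⌊Y⌋) : |X - Y| < 1 := by
  have h1 := Int.floor_le X
  have h2 := Int.lt_floor_add_one X
  have h3 := Int.floor_le Y
  have h4 := Int.lt_floor_add_one Y
  rw [h] at h1 h2
  rw [abs_lt]; constructor <;> linarith

private lemma log_diff_le {u v m t : ℝ} (hm : 0 < m) (hmu : m ≤ u) (hmv : m ≤ v)
    (h : |u - v| ≤ t) : |Real.log u - Real.log v| ≤ t / m := by
  have ht0 : 0 ≤ t := le_trans (abs_nonneg _) h
  have key : ∀ p q : ℝ, m ≤ p → m ≤ q → q ≤ p → p - q ≤ t →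
      Real.log p - Real.log q ≤ t / m := by
    intro p q hp hq hqp hpt
    have hq0 : 0 < q := lt_of_lt_of_le hm hq
    have hp0 : 0 < p := lt_of_lt_of_le hm hp
    have h1 : Real.log p - Real.log q = Real.log (p / q) :=
      (Real.log_div hp0.ne' hq0.ne').symm
    rw [h1]
    have h2 : Real.log (p / q) ≤ p / q - 1 := Real.log_le_sub_one_of_pos (by positivity)
    have h3 : p / q - 1 = (p - q) / q := by field_simp
    have h4 : (p - q) / q ≤ t / m := div_le_div₀ ht0 hpt hm hq
    linarith
  rw [abs_le] at h
  rcases le_total u v with huv | huv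
  · have h5 := key v u hmv hmu huv (by linarith)
    have h6 : Real.log u ≤ Real.log v :=
      Real.log_le_log (lt_of_lt_of_le hm hmu) huv
    rw [abs_le]
    constructor <;> linarith [div_nonneg ht0 hm.le]
  · have h5 := key u v hmu hmv huv (by linarith)
    have h6 : Real.log v ≤ Real.log u :=
      Real.log_le_log (lt_of_lt_of_le hm hmv) huv
    rw [abs_le]
    constructor <;> linarith [div_nonneg ht0 hm.le]


/- `ℕ+` plays the role of the paper's `ℕ` (the positive integers). -/

/-- If `c₁,…,cₙ` are nonzero integers, `d₁,…,dₙ ≥ 1`, and the equation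
`∑ᵢ cᵢ xᵢ^{dᵢ} = 0` is non-trivially partition regular on `ℕ`, then there is a
nonempty `J ⊆ {1,…,n}` with all exponents `dⱼ` (for `j ∈ J`) equal and
`∑_{j∈J} cⱼ = 0`. -/
theorem powers_rado_condition_necessary {n : ℕ} (c : Fin n → ℤ)
    (hc : ∀ i, c i ≠ 0) (d : Fin n → ℕ) (hd : ∀ i, 1 ≤ d i)
    (hPR : ∀ (r : ℕ) (C : ℕ+ → Fin r), ∃ a : Fin n → ℕ+,
      (∀ i j, C (a i) = C (a j)) ∧
      (∑ i, c i * ((a i : ℕ) : ℤ) ^ d i) = 0 ∧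
      (∃ i j, a i ≠ a j)) :
    ∃ J : Finset (Fin n), J.Nonempty ∧
      (∀ i ∈ J, ∀ j ∈ J, d i = d j) ∧ ∑ j ∈ J, c j = 0 := by
  classical
  by_contra hcon
  push_neg at hcon
  obtain ⟨a0, -, -, i0, -, -⟩ := hPR 1 (fun _ => 0)
  -- constants
  set Cr : ℝ := ∑ i, |(c i : ℝ)| with hCrdef
  have habs1 : ∀ i : Fin n, (1:ℝ) ≤ |(c i : ℝ)| := by
    intro i
    have h1 : (1:ℤ) ≤ |c i| := Int.one_le_abs (hc i)
    have h2 : ((1:ℤ):ℝ) ≤ ((|c i| : ℤ):ℝ) := by exact_mod_cast h1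
    rw [Int.cast_abs] at h2
    simpa using h2
  have hCr1 : (1:ℝ) ≤ Cr := by
    rw [hCrdef]
    exact le_trans (habs1 i0) (Finset.single_le_sum (f := fun i => |(c i:ℝ)|)
      (fun i _ => abs_nonneg _) (mem_univ i0))
  have hCr0 : (0:ℝ) < Cr := lt_of_lt_of_le one_pos hCr1
  set D : ℕ := Finset.univ.sup d with hDdef
  have hDle : ∀ i, d i ≤ D := fun i => Finset.le_sup (mem_univ i)
  have hD1 : 1 ≤ D := le_trans (hd i0) (hDle i0)
  have hDR1 : (1:ℝ) ≤ (D:ℝ) := by exact_mod_cast hD1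
  set β₀ : ℝ := Real.log (2 * Cr) + 1 with hβ₀def
  have hlog2Cr : 0 ≤ Real.log (2 * Cr) := Real.log_nonneg (by linarith)
  have hβ₀1 : 1 ≤ β₀ := by rw [hβ₀def]; linarith
  set βt : ℝ := 3 ^ n * β₀ with hβtdef
  have h3n : (1:ℝ) ≤ 3 ^ n := one_le_pow₀ (by norm_num : (1:ℝ) ≤ 3)
  have hβtβ₀ : β₀ ≤ βt := by rw [hβtdef]; nlinarith
  have hβt0 : 0 < βt := by linarith
  set L : ℝ := Real.log (1 + 1 / (2 * Cr)) with hLdef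
  have hL0 : 0 < L := by
    rw [hLdef]
    apply Real.log_pos
    have : 0 < 1 / (2 * Cr) := by positivity
    linarith
  set K : ℝ := (D:ℝ) / L with hKdef
  have hK0 : 0 < K := by rw [hKdef]; positivity
  have hDK : (D:ℝ) / K = L := by
    rw [hKdef]
    field_simp
  set R : ℕ := ⌈K * βt⌉₊ + 2 with hRdef
  set c₀ : ℝ := Real.log D - Real.log ((D:ℝ) - 1) with hc₀def
  set η : ℝ := c₀ / 4 with hηdef
  set S : ℕ := ⌈Real.log D / η⌉₊ + 3 with hSdef
  set A₀ : ℕ := 3 + ⌈Real.exp ((βt + 2) * (4 / c₀))⌉₊ with hA₀def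
  have hA₀3 : 3 ≤ A₀ := by rw [hA₀def]; omega
  set X₀ : ℝ := Real.log A₀ with hX₀def
  have hA₀R3 : (3:ℝ) ≤ (A₀:ℝ) := by exact_mod_cast hA₀3
  have hX₀1 : 1 ≤ X₀ := by
    have h1 : Real.exp 1 < 3 := lt_trans Real.exp_one_lt_d9 (by norm_num)
    calc (1:ℝ) = Real.log (Real.exp 1) := (Real.log_exp 1).symm
      _ ≤ X₀ := Real.log_le_log (Real.exp_pos 1) (by linarith)
  have hX₀0 : 0 < X₀ := by linarith
  have hX₀big : (βt + 2) * (4 / c₀) ≤ X₀ := by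
    have h1 : Real.exp ((βt + 2) * (4 / c₀)) ≤ (A₀ : ℝ) := by
      have h2 := Nat.le_ceil (Real.exp ((βt + 2) * (4 / c₀)))
      have h3 : ((⌈Real.exp ((βt + 2) * (4 / c₀))⌉₊ : ℕ):ℝ) ≤ (A₀:ℝ) := by
        rw [hA₀def]; push_cast; linarith
      linarith
    calc (βt + 2) * (4/c₀) = Real.log (Real.exp ((βt+2)*(4/c₀))) := (Real.log_exp _).symm
      _ ≤ X₀ := Real.log_le_log (Real.exp_pos _) h1
  clear_value Cr D β₀ βt L K R c₀ η S A₀ X₀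
  -- the coloring
  haveI hRne : NeZero R := ⟨by rw [hRdef]; omega⟩
  haveI hSne : NeZero S := ⟨by rw [hSdef]; omega⟩
  obtain ⟨a, hmono, hsum, iw, jw, hw⟩ :=
    hPR (Fintype.card (Fin (A₀+1) × ZMod R × ZMod S))
      (fun q => (Fintype.equivFin (Fin (A₀+1) × ZMod R × ZMod S))
        (⟨min (q:ℕ) A₀, Nat.lt_succ_of_le (Nat.min_le_right _ _)⟩,
         ((⌊K * Real.log ((q:ℕ):ℝ)⌋ : ℤ) : ZMod R),
         ((⌊Real.log (Real.log ((q:ℕ):ℝ) + 1) / η⌋ : ℤ) : ZMod S)))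
  have htup : ∀ i j, ((⟨min ((a i:ℕ)) A₀, Nat.lt_succ_of_le (Nat.min_le_right _ _)⟩ : Fin (A₀+1)),
         ((⌊K * Real.log ((a i:ℕ):ℝ)⌋ : ℤ) : ZMod R),
         ((⌊Real.log (Real.log ((a i:ℕ):ℝ) + 1) / η⌋ : ℤ) : ZMod S))
      = ((⟨min ((a j:ℕ)) A₀, Nat.lt_succ_of_le (Nat.min_le_right _ _)⟩ : Fin (A₀+1)),
         ((⌊K * Real.log ((a j:ℕ):ℝ)⌋ : ℤ) : ZMod R),
         ((⌊Real.log (Real.log ((a j:ℕ):ℝ) + 1) / η⌋ : ℤ) : ZMod S)) :=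
    fun i j => (Fintype.equivFin _).injective (hmono i j)
  have hfmin : ∀ i j, min ((a i : ℕ)) A₀ = min ((a j : ℕ)) A₀ := by
    intro i j
    have h1 := congrArg (fun p => (p.1 : Fin (A₀+1)).val) (htup i j)
    simpa using h1
  have hfK : ∀ i j, ((⌊K * Real.log ((a i:ℕ):ℝ)⌋ : ℤ) : ZMod R)
      = ((⌊K * Real.log ((a j:ℕ):ℝ)⌋ : ℤ) : ZMod R) := by
    intro i j
    exact congrArg (fun p => p.2.1) (htup i j)
  have hfS : ∀ i j, ((⌊Real.log (Real.log ((a i:ℕ):ℝ) + 1) / η⌋ : ℤ) : ZMod S)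
      = ((⌊Real.log (Real.log ((a j:ℕ):ℝ) + 1) / η⌋ : ℤ) : ZMod S) := by
    intro i j
    exact congrArg (fun p => p.2.2) (htup i j)
  -- Step A : all big
  have hbig : ∀ i, A₀ ≤ (a i : ℕ) := by
    by_contra hb
    push_neg at hb
    obtain ⟨i1, hi1⟩ := hb
    have hall : ∀ j, a j = a i1 := by
      intro j
      have hj := hfmin j i1
      rw [min_eq_left hi1.le] at hj
      have hcoe : (a j : ℕ) = (a i1 : ℕ) := by
        rcases le_total ((a j : ℕ)) A₀ with h | h
        · rwa [min_eq_left h] at hj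
        · rw [min_eq_right h] at hj; omega
      exact PNat.coe_injective hcoe
    exact hw (by rw [hall iw, hall jw])
  -- logs
  have haA : ∀ i, (A₀:ℝ) ≤ ((a i : ℕ):ℝ) := fun i => by exact_mod_cast hbig i
  have ha0 : ∀ i, (0:ℝ) < ((a i : ℕ):ℝ) := fun i => lt_of_lt_of_le (by linarith) (haA i)
  set x : Fin n → ℝ := fun i => Real.log ((a i : ℕ) : ℝ) with hxdef
  have hxval : ∀ i, x i = Real.log ((a i : ℕ) : ℝ) := fun i => rfl
  have hxX₀ : ∀ i, X₀ ≤ x i := by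
    intro i
    rw [hxval, hX₀def]
    exact Real.log_le_log (by linarith) (haA i)
  have hx1 : ∀ i, 1 ≤ x i := fun i => le_trans hX₀1 (hxX₀ i)
  set e : Fin n → ℝ := fun i => (d i : ℝ) * x i with hedef
  have heval : ∀ i, e i = (d i : ℝ) * x i := fun i => rfl
  have hdR1 : ∀ i, (1:ℝ) ≤ (d i : ℝ) := fun i => by exact_mod_cast hd i
  have heX₀ : ∀ i, X₀ ≤ e i := by
    intro i
    rw [heval]
    nlinarith [hdR1 i, hx1 i, hxX₀ i, hX₀0]
  have hexpx : ∀ i, Real.exp (x i) = ((a i:ℕ):ℝ) := fun i => Real.exp_log (ha0 i)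
  have hapow : ∀ i, (((a i:ℕ):ℝ)) ^ (d i) = Real.exp (e i) := by
    intro i
    rw [heval, Real.exp_nat_mul, hexpx i]
  clear_value x e
  -- max
  obtain ⟨istar, -, hestar⟩ := Finset.exists_max_image univ e ⟨i0, mem_univ i0⟩
  set estar := e istar with hestardef
  have hestarle : ∀ i, e i ≤ estar := fun i => hestar i (mem_univ i)
  -- cluster extraction
  set Tf : ℕ → Finset (Fin n) := fun m => univ.filter (fun i => estar - 3 ^ m * β₀ < e i)
    with hTfdef
  have hTfmem : ∀ m i, i ∈ Tf m ↔ estar - 3 ^ m * β₀ < e i := by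
    intro m i; rw [hTfdef]; simp
  clear_value Tf
  have hTfmono : ∀ m, Tf m ⊆ Tf (m+1) := by
    intro m i hi
    rw [hTfmem] at hi ⊢
    have h1 : (3:ℝ)^m ≤ 3^(m+1) := pow_le_pow_right₀ (by norm_num) (Nat.le_succ m)
    nlinarith
  have hstar0 : istar ∈ Tf 0 := by
    rw [hTfmem]
    simp only [pow_zero, one_mul]
    linarith
  obtain ⟨m, hmn, hTeq⟩ : ∃ m, m < n ∧ Tf m = Tf (m+1) := by
    by_contra hno
    push_neg at hno
    have hcard : ∀ m, m ≤ n → m + 1 ≤ (Tf m).card := by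
      intro m
      induction m with
      | zero => intro _; exact Finset.card_pos.mpr ⟨istar, hstar0⟩
      | succ k ih =>
        intro hk
        have h1 := ih (by omega)
        have hss : Tf k ⊂ Tf (k+1) :=
          (Finset.ssubset_iff_subset_ne).mpr ⟨hTfmono k, hno k (by omega)⟩
        have h2 := Finset.card_lt_card hss
        omega
    have h1 := hcard n le_rfl
    have h2 : (Tf n).card ≤ n := by
      rw [hTfdef]
      calc (univ.filter (fun i => estar - 3 ^ n * β₀ < e i)).card
          ≤ (univ : Finset (Fin n)).card := Finset.card_filter_le _ _
        _ = n := by simp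
    omega
  set b := (3:ℝ)^m * β₀ with hbdef
  clear_value b
  have h3m1 : (1:ℝ) ≤ 3^m := one_le_pow₀ (by norm_num : (1:ℝ) ≤ 3)
  have hb0 : β₀ ≤ b := by rw [hbdef]; nlinarith
  have hb1 : 1 ≤ b := le_trans hβ₀1 hb0
  have hbβt : 3 * b ≤ βt := by
    rw [hbdef, hβtdef]
    have h1 : (3:ℝ) * 3^m = 3^(m+1) := by ring
    have h2 : (3:ℝ)^(m+1) ≤ 3^n := pow_le_pow_right₀ (by norm_num) (by omega)
    nlinarith
  have hbβt' : b ≤ βt := by linarith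
  set T := Tf m with hTdef
  clear_value T
  have hTmem : ∀ i, i ∈ T ↔ estar - b < e i := by
    intro i; rw [hTdef, hbdef]; exact hTfmem m i
  have hTout : ∀ i, i ∉ T → e i ≤ estar - 3 * b := by
    intro i hi
    have h1 : i ∉ Tf (m+1) := by rw [← hTeq]; exact hi
    rw [hTfmem] at h1
    push_neg at h1
    have h2 : (3:ℝ)^(m+1) * β₀ = 3 * b := by rw [hbdef]; ring
    linarith [h1, h2.le, h2.ge]
  have hTne : T.Nonempty := ⟨istar, by rw [hTmem]; linarith⟩
  -- Step D : d is constant on T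
  have hkey : ∀ i ∈ T, ∀ j ∈ T, d j < d i → False := by
    intro i hi j hj hdij
    have hdi2 : 2 ≤ d i := by have := hd j; omega
    have hD2 : 2 ≤ D := le_trans hdi2 (hDle i)
    have hD2R : (2:ℝ) ≤ (D:ℝ) := by exact_mod_cast hD2
    have hc₀pos : 0 < c₀ := by
      rw [hc₀def]
      have h1 : (0:ℝ) < (D:ℝ) - 1 := by linarith
      have h2 := Real.log_lt_log h1 (by linarith : (D:ℝ) - 1 < (D:ℝ))
      linarith
    have hηpos : 0 < η := by rw [hηdef]; linarith
    have hei := (hTmem i).mp hi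
    have hej := (hTmem j).mp hj
    have hediff : |e i - e j| ≤ b := by
      rw [abs_le]
      constructor <;> [linarith [hestarle i, hestarle j]; linarith [hestarle i, hestarle j]]
    have hlogE := log_diff_le hX₀0 (heX₀ i) (heX₀ j) hediff
    have hlogmul : ∀ k : Fin n, Real.log (e k) = Real.log (d k : ℝ) + Real.log (x k) := by
      intro k
      rw [heval k]
      exact Real.log_mul (ne_of_gt (by linarith [hdR1 k])) (ne_of_gt (by linarith [hx1 k]))
    have hlamx : ∀ k : Fin n, 0 ≤ Real.log (x k + 1) - Real.log (x k) ∧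
        Real.log (x k + 1) - Real.log (x k) ≤ 1 / X₀ := by
      intro k
      have hxk : 0 < x k := by linarith [hx1 k]
      constructor
      · have := Real.log_le_log hxk (by linarith : x k ≤ x k + 1)
        linarith
      · have h1 : Real.log (x k + 1) - Real.log (x k) = Real.log ((x k + 1)/(x k)) :=
          (Real.log_div (by linarith) (ne_of_gt hxk)).symm
        rw [h1]
        have h2 := Real.log_le_sub_one_of_pos (show (0:ℝ) < (x k + 1)/x k by positivity)
        have h3 : (x k + 1)/x k - 1 = 1 / x k := by field_simp; ring
        have h4 : 1 / x k ≤ 1 / X₀ := one_div_le_one_div_of_le hX₀0 (hxX₀ k)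
        linarith
    have hzS := hfS i j
    rw [← hxval i, ← hxval j] at hzS
    have hWd : |Real.log (d i:ℝ) - Real.log (d j:ℝ)| ≤ Real.log D := by
      have h1 : (0:ℝ) ≤ Real.log (d i:ℝ) := Real.log_nonneg (hdR1 i)
      have h2 : (0:ℝ) ≤ Real.log (d j:ℝ) := Real.log_nonneg (hdR1 j)
      have h3 : Real.log (d i:ℝ) ≤ Real.log D :=
        Real.log_le_log (by linarith [hdR1 i]) (by exact_mod_cast hDle i)
      have h4 : Real.log (d j:ℝ) ≤ Real.log D :=
        Real.log_le_log (by linarith [hdR1 j]) (by exact_mod_cast hDle j)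
      rw [abs_le]; constructor <;> linarith
    have hslack : |(Real.log (x i + 1) - Real.log (x j + 1))
        - (Real.log (x i) - Real.log (x j))| ≤ 1 / X₀ := by
      obtain ⟨h1, h2⟩ := hlamx i
      obtain ⟨h3, h4⟩ := hlamx j
      rw [abs_le]; constructor <;> linarith
    have hlogx : Real.log (x i) - Real.log (x j)
        = (Real.log (e i) - Real.log (e j)) - (Real.log (d i:ℝ) - Real.log (d j:ℝ)) := by
      rw [hlogmul i, hlogmul j]; ring
    have hbX : (b + 1) / X₀ ≤ c₀ / 4 := by
      rw [div_le_div_iff₀ hX₀0 (by norm_num : (0:ℝ) < 4)]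
      have h1 : c₀ * X₀ ≥ c₀ * ((βt + 2) * (4 / c₀)) :=
        mul_le_mul_of_nonneg_left hX₀big hc₀pos.le
      have h2 : c₀ * ((βt + 2) * (4 / c₀)) = 4 * (βt + 2) := by field_simp
      nlinarith
    have hlamdiff : |Real.log (x i + 1) - Real.log (x j + 1)| ≤ Real.log D + c₀ / 4 := by
      rw [abs_le] at hlogE hslack hWd ⊢
      have hbX' : b / X₀ + 1 / X₀ ≤ c₀ / 4 := by
        rw [← add_div]; exact hbX
      constructor <;>
        linarith only [hlogE.1, hlogE.2, hslack.1, hslack.2, hWd.1, hWd.2, hlogx, hbX']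
    have hfl : ⌊Real.log (x i + 1) / η⌋ = ⌊Real.log (x j + 1) / η⌋ := by
      apply int_eq_of_zmod_eq' hzS
      have h1 : |Real.log (x i + 1) / η - Real.log (x j + 1) / η|
          ≤ Real.log D / η + 1 := by
        rw [div_sub_div_same, abs_div, abs_of_pos hηpos]
        rw [div_le_iff₀ hηpos]
        calc |Real.log (x i + 1) - Real.log (x j + 1)| ≤ Real.log D + c₀/4 := hlamdiff
          _ = Real.log D + η := by rw [hηdef]
          _ ≤ (Real.log D / η + 1) * η := by
              rw [add_mul, div_mul_cancel₀ _ (ne_of_gt hηpos)]; linarith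
      have h2 := abs_floor_sub_le h1
      have h3 : Real.log D / η ≤ (⌈Real.log D / η⌉₊ : ℝ) := Nat.le_ceil _
      have h4 : (|⌊Real.log (x i + 1) / η⌋ - ⌊Real.log (x j + 1) / η⌋| : ℝ) < (S:ℝ) := by
        rw [hSdef]
        push_cast
        calc (|⌊Real.log (x i + 1) / η⌋ - ⌊Real.log (x j + 1) / η⌋| : ℝ)
            = |(⌊Real.log (x i + 1) / η⌋:ℝ) - (⌊Real.log (x j + 1) / η⌋:ℝ)| := by push_cast; rfl
          _ ≤ Real.log D / η + 1 + 1 := h2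
          _ < ⌈Real.log D / η⌉₊ + 3 := by linarith
      exact_mod_cast h4
    have hlamsmall : |Real.log (x i + 1) - Real.log (x j + 1)| < η := by
      have h1 := abs_lt_one_of_floor_eq hfl
      have h2 : Real.log (x i + 1) - Real.log (x j + 1)
          = η * (Real.log (x i + 1) / η - Real.log (x j + 1) / η) := by
        field_simp
      rw [h2, abs_mul, abs_of_pos hηpos]
      nlinarith
    -- now |log d i - log d j| < c₀/2
    have hW : |Real.log (d i:ℝ) - Real.log (d j:ℝ)| < c₀ / 2 := by
      rw [abs_lt] at hlamsmall ⊢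
      rw [abs_le] at hlogE hslack
      have hη4 : η = c₀ / 4 := hηdef
      have hbX' : b / X₀ + 1 / X₀ ≤ c₀ / 4 := by
        rw [← add_div]; exact hbX
      constructor <;>
        linarith only [hlamsmall.1, hlamsmall.2, hlogE.1, hlogE.2, hslack.1, hslack.2, hlogx, hbX', hηdef]
    have hWlow : c₀ ≤ Real.log (d i:ℝ) - Real.log (d j:ℝ) := by
      have hdj1 : (1:ℝ) ≤ (d j:ℝ) := hdR1 j
      have hdjdi : (d j : ℝ) ≤ (d i:ℝ) - 1 := by
        have : d j + 1 ≤ d i := hdij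
        have h := (Nat.cast_le (α := ℝ)).mpr this
        push_cast at h
        linarith
      have hdi1 : (0:ℝ) < (d i:ℝ) - 1 := by linarith
      have h1 : Real.log (d j:ℝ) ≤ Real.log ((d i:ℝ) - 1) :=
        Real.log_le_log (by linarith) hdjdi
      have hDm1 : (0:ℝ) < (D:ℝ) - 1 := by linarith
      have hdiD : (d i : ℝ) ≤ (D:ℝ) := by exact_mod_cast hDle i
      have hprod : (D:ℝ) * ((d i:ℝ) - 1) ≤ (d i:ℝ) * ((D:ℝ) - 1) := by
        have hr : (D:ℝ)*((d i:ℝ)-1) - (d i:ℝ)*((D:ℝ)-1) = (d i:ℝ) - (D:ℝ) := by ring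
        linarith only [hdiD, hr]
      have h2 : Real.log ((D:ℝ) * ((d i:ℝ) - 1)) ≤ Real.log ((d i:ℝ) * ((D:ℝ) - 1)) :=
        Real.log_le_log (by positivity) hprod
      rw [Real.log_mul (ne_of_gt (by linarith : (0:ℝ) < (D:ℝ))) (ne_of_gt hdi1),
        Real.log_mul (ne_of_gt (by linarith [hdR1 i] : (0:ℝ) < (d i:ℝ))) (ne_of_gt hDm1)] at h2
      rw [hc₀def]
      linarith
    have := le_trans hWlow (le_abs_self _)
    linarith
  have hdconst : ∀ i ∈ T, ∀ j ∈ T, d i = d j := by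
    intro i hi j hj
    rcases lt_trichotomy (d i) (d j) with h | h | h
    · exact absurd (hkey j hj i hi h) (by simp)
    · exact h
    · exact absurd (hkey i hi j hj h) (by simp)
  -- Step E : within the cluster, same window
  have hwin : ∀ i ∈ T, ∀ j ∈ T, |x i - x j| < 1 / K := by
    intro i hi j hj
    have hdij := hdconst i hi j hj
    have hei := (hTmem i).mp hi
    have hej := (hTmem j).mp hj
    have hediff : |e i - e j| ≤ b := by
      rw [abs_le]
      constructor <;> linarith only [hestarle i, hestarle j, hei, hej]
    have hxd : |x i - x j| ≤ b := by
      have h1 : e i - e j = (d i:ℝ) * (x i - x j) := by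
        rw [heval i, heval j, hdij]; ring
      rw [h1, abs_mul, abs_of_pos (by linarith only [hdR1 i] : (0:ℝ) < (d i:ℝ))] at hediff
      have h2 : |x i - x j| ≤ (d i:ℝ) * |x i - x j| := by
        nlinarith [abs_nonneg (x i - x j), hdR1 i]
      linarith only [h2, hediff]
    have hzR := hfK i j
    rw [← hxval i, ← hxval j] at hzR
    have hfl : ⌊K * x i⌋ = ⌊K * x j⌋ := by
      apply int_eq_of_zmod_eq' hzR
      have h1 : |K * x i - K * x j| ≤ K * b := by
        rw [← mul_sub, abs_mul, abs_of_pos hK0]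
        exact mul_le_mul_of_nonneg_left hxd hK0.le
      have h2 := abs_floor_sub_le h1
      have h3 : K * b ≤ K * βt := mul_le_mul_of_nonneg_left hbβt' hK0.le
      have h4 : K * βt ≤ (⌈K * βt⌉₊ : ℝ) := Nat.le_ceil _
      have h5 : (|⌊K * x i⌋ - ⌊K * x j⌋| : ℝ) < (R:ℝ) := by
        rw [hRdef]
        push_cast
        calc (|⌊K * x i⌋ - ⌊K * x j⌋| : ℝ)
            = |(⌊K * x i⌋:ℝ) - (⌊K * x j⌋:ℝ)| := by push_cast; rfl
          _ ≤ K * b + 1 := h2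
          _ < ⌈K * βt⌉₊ + 2 := by linarith only [h3, h4]
      exact_mod_cast h5
    have h6 := abs_lt_one_of_floor_eq hfl
    rw [← mul_sub, abs_mul, abs_of_pos hK0] at h6
    rw [lt_div_iff₀ hK0, mul_comm]
    exact h6
  -- choose minimal element of T
  obtain ⟨i1, hi1T, hi1min⟩ := Finset.exists_min_image T (fun i => (a i : ℕ)) hTne
  have hApow0 : (0:ℝ) < ((a i1:ℕ):ℝ) ^ (d i1) := by positivity
  have hApowexp : ((a i1:ℕ):ℝ) ^ (d i1) = Real.exp (e i1) := hapow i1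
  have hApowlow : Real.exp (estar - b) < ((a i1:ℕ):ℝ) ^ (d i1) := by
    rw [hApowexp]
    exact Real.exp_lt_exp.mpr ((hTmem i1).mp hi1T)
  -- bounds for elements of T
  have hbound : ∀ i ∈ T, ((a i1:ℕ):ℝ) ^ (d i1) ≤ ((a i:ℕ):ℝ) ^ (d i1) ∧
      ((a i:ℕ):ℝ) ^ (d i1) ≤ ((a i1:ℕ):ℝ) ^ (d i1) * (1 + 1/(2*Cr)) := by
    intro i hi
    constructor
    · apply pow_le_pow_left₀ (by positivity)
      exact_mod_cast hi1min i hi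
    · have hδd : d i = d i1 := hdconst i hi i1 hi1T
      have h1 : ((a i:ℕ):ℝ) ^ (d i1) = Real.exp ((d i1:ℝ) * x i) := by
        rw [← hδd, hapow i, heval i, hδd]
      rw [h1, hApowexp, heval i1]
      have hxij := hwin i hi i1 hi1T
      have habs := (abs_lt.mp hxij).2
      have hδD : (d i1:ℝ) ≤ (D:ℝ) := by exact_mod_cast hDle i1
      have hδ0 : (0:ℝ) < (d i1:ℝ) := by linarith only [hdR1 i1]
      have h2 : (d i1:ℝ) * x i ≤ (d i1:ℝ) * x i1 + (D:ℝ) / K := by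
        have h3 : (d i1:ℝ) * (x i - x i1) ≤ (d i1:ℝ) * (1/K) :=
          mul_le_mul_of_nonneg_left habs.le hδ0.le
        have h4 : (d i1:ℝ) * (1/K) ≤ (D:ℝ) * (1/K) :=
          mul_le_mul_of_nonneg_right hδD (by positivity)
        have h5 : (D:ℝ) * (1/K) = (D:ℝ)/K := by ring
        nlinarith [h3, h4, h5]
      calc Real.exp ((d i1:ℝ) * x i) ≤ Real.exp ((d i1:ℝ) * x i1 + (D:ℝ)/K) :=
            Real.exp_le_exp.mpr h2
        _ = Real.exp ((d i1:ℝ) * x i1) * Real.exp ((D:ℝ)/K) := Real.exp_add _ _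
        _ = Real.exp ((d i1:ℝ) * x i1) * (1 + 1/(2*Cr)) := by
            rw [hDK, hLdef, Real.exp_log (by positivity)]
  -- the real sum
  have hsumR : ∑ i, (c i:ℝ) * ((a i:ℕ):ℝ) ^ (d i) = 0 := by
    have h := congrArg (fun z : ℤ => (z : ℝ)) hsum
    push_cast at h
    exact h
  have hsplit : ∑ i ∈ T, (c i:ℝ) * ((a i:ℕ):ℝ) ^ (d i)
      + ∑ i ∈ Tᶜ, (c i:ℝ) * ((a i:ℕ):ℝ) ^ (d i) = 0 := by
    rw [Finset.sum_add_sum_compl]; exact hsumR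
  have hσne : (∑ j ∈ T, c j) ≠ 0 := hcon T hTne hdconst
  have hσ1 : (1:ℝ) ≤ |((∑ j ∈ T, c j : ℤ):ℝ)| := by
    have h1 : (1:ℤ) ≤ |∑ j ∈ T, c j| := Int.one_le_abs hσne
    have h2 : ((1:ℤ):ℝ) ≤ ((|∑ j ∈ T, c j| : ℤ):ℝ) := by exact_mod_cast h1
    rw [Int.cast_abs] at h2
    simpa using h2
  have hsumT : ∑ i ∈ T, (c i:ℝ) * ((a i:ℕ):ℝ) ^ (d i)
      = ∑ i ∈ T, (c i:ℝ) * ((a i:ℕ):ℝ) ^ (d i1) := by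
    apply Finset.sum_congr rfl
    intro i hi
    rw [hdconst i hi i1 hi1T]
  -- lower bound for |sum over T|
  have hdecomp : ∑ i ∈ T, (c i:ℝ) * ((a i:ℕ):ℝ) ^ (d i1)
      = (∑ i ∈ T, (c i:ℝ)) * (((a i1:ℕ):ℝ) ^ (d i1))
        + ∑ i ∈ T, (c i:ℝ) * (((a i:ℕ):ℝ) ^ (d i1) - ((a i1:ℕ):ℝ) ^ (d i1)) := by
    rw [Finset.sum_mul, ← Finset.sum_add_distrib]
    apply Finset.sum_congr rfl
    intro i _
    ring
  have herr : |∑ i ∈ T, (c i:ℝ) * (((a i:ℕ):ℝ) ^ (d i1) - ((a i1:ℕ):ℝ) ^ (d i1))|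
      ≤ ((a i1:ℕ):ℝ) ^ (d i1) / 2 := by
    calc |∑ i ∈ T, (c i:ℝ) * (((a i:ℕ):ℝ) ^ (d i1) - ((a i1:ℕ):ℝ) ^ (d i1))|
        ≤ ∑ i ∈ T, |(c i:ℝ) * (((a i:ℕ):ℝ) ^ (d i1) - ((a i1:ℕ):ℝ) ^ (d i1))| :=
          Finset.abs_sum_le_sum_abs _ _
      _ ≤ ∑ i ∈ T, |(c i:ℝ)| * (((a i1:ℕ):ℝ) ^ (d i1) * (1/(2*Cr))) := by
          apply Finset.sum_le_sum
          intro i hi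
          rw [abs_mul]
          apply mul_le_mul_of_nonneg_left _ (abs_nonneg _)
          obtain ⟨hl, hu⟩ := hbound i hi
          rw [abs_of_nonneg (by linarith only [hl])]
          nlinarith [hu]
      _ = (∑ i ∈ T, |(c i:ℝ)|) * (((a i1:ℕ):ℝ) ^ (d i1) * (1/(2*Cr))) :=
          (Finset.sum_mul _ _ _).symm
      _ ≤ Cr * (((a i1:ℕ):ℝ) ^ (d i1) * (1/(2*Cr))) := by
          apply mul_le_mul_of_nonneg_right _ (by positivity)
          rw [hCrdef]
          exact Finset.sum_le_sum_of_subset_of_nonneg (Finset.subset_univ T)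
            (fun i _ _ => abs_nonneg _)
      _ = ((a i1:ℕ):ℝ) ^ (d i1) / 2 := by
          field_simp
  have hcast : (∑ i ∈ T, (c i:ℝ)) = ((∑ j ∈ T, c j : ℤ):ℝ) := by push_cast; rfl
  have hmain : ((a i1:ℕ):ℝ) ^ (d i1) ≤ |(∑ i ∈ T, (c i:ℝ)) * (((a i1:ℕ):ℝ) ^ (d i1))| := by
    rw [abs_mul, abs_of_pos hApow0, hcast]
    nlinarith [hσ1, hApow0]
  have hlow : ((a i1:ℕ):ℝ) ^ (d i1) / 2 ≤ |∑ i ∈ T, (c i:ℝ) * ((a i:ℕ):ℝ) ^ (d i)| := by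
    rw [hsumT, hdecomp]
    have htri : |(∑ i ∈ T, (c i:ℝ)) * (((a i1:ℕ):ℝ) ^ (d i1))|
        ≤ |(∑ i ∈ T, (c i:ℝ)) * (((a i1:ℕ):ℝ) ^ (d i1))
            + ∑ i ∈ T, (c i:ℝ) * (((a i:ℕ):ℝ) ^ (d i1) - ((a i1:ℕ):ℝ) ^ (d i1))|
          + |∑ i ∈ T, (c i:ℝ) * (((a i:ℕ):ℝ) ^ (d i1) - ((a i1:ℕ):ℝ) ^ (d i1))| := by
      have := abs_add_le ((∑ i ∈ T, (c i:ℝ)) * (((a i1:ℕ):ℝ) ^ (d i1))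
            + ∑ i ∈ T, (c i:ℝ) * (((a i:ℕ):ℝ) ^ (d i1) - ((a i1:ℕ):ℝ) ^ (d i1)))
          (- ∑ i ∈ T, (c i:ℝ) * (((a i:ℕ):ℝ) ^ (d i1) - ((a i1:ℕ):ℝ) ^ (d i1)))
      simp only [add_neg_cancel_right, abs_neg] at this
      exact this
    linarith only [htri, herr, hmain]
  -- upper bound for |sum over complement|
  have hup : |∑ i ∈ Tᶜ, (c i:ℝ) * ((a i:ℕ):ℝ) ^ (d i)| ≤ Cr * Real.exp (estar - 3*b) := by
    calc |∑ i ∈ Tᶜ, (c i:ℝ) * ((a i:ℕ):ℝ) ^ (d i)|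
        ≤ ∑ i ∈ Tᶜ, |(c i:ℝ) * ((a i:ℕ):ℝ) ^ (d i)| := Finset.abs_sum_le_sum_abs _ _
      _ ≤ ∑ i ∈ Tᶜ, |(c i:ℝ)| * Real.exp (estar - 3*b) := by
          apply Finset.sum_le_sum
          intro i hi
          rw [abs_mul]
          apply mul_le_mul_of_nonneg_left _ (abs_nonneg _)
          rw [abs_of_nonneg (by positivity), hapow i]
          exact Real.exp_le_exp.mpr (hTout i (Finset.mem_compl.mp hi))
      _ = (∑ i ∈ Tᶜ, |(c i:ℝ)|) * Real.exp (estar - 3*b) := (Finset.sum_mul _ _ _).symm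
      _ ≤ Cr * Real.exp (estar - 3*b) := by
          apply mul_le_mul_of_nonneg_right _ (Real.exp_pos _).le
          rw [hCrdef]
          exact Finset.sum_le_sum_of_subset_of_nonneg (Finset.subset_univ Tᶜ)
            (fun i _ _ => abs_nonneg _)
  -- combine
  have heq2 : |∑ i ∈ T, (c i:ℝ) * ((a i:ℕ):ℝ) ^ (d i)|
      = |∑ i ∈ Tᶜ, (c i:ℝ) * ((a i:ℕ):ℝ) ^ (d i)| := by
    have h1 : ∑ i ∈ T, (c i:ℝ) * ((a i:ℕ):ℝ) ^ (d i)
        = - ∑ i ∈ Tᶜ, (c i:ℝ) * ((a i:ℕ):ℝ) ^ (d i) := by linarith only [hsplit]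
    rw [h1, abs_neg]
  have hfinal : Real.exp (estar - b) / 2 < Cr * Real.exp (estar - 3*b) := by
    have h1 := hlow
    rw [heq2] at h1
    linarith only [h1, hup, hApowlow]
  have hgap : Real.exp (estar - b) < Real.exp (Real.log (2*Cr) + (estar - 3*b)) := by
    rw [Real.exp_add, Real.exp_log (by linarith only [hCr0] : (0:ℝ) < 2*Cr)]
    linarith only [hfinal]
  have h2 := Real.exp_lt_exp.mp hgap
  have h3 : Real.log (2*Cr) = β₀ - 1 := by rw [hβ₀def]; ring
  linarith only [h2, h3, hb1, hb0, hβ₀1]
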